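/- For a bounded operator X on a reproducing kernel Hilbert space, ber(X)² ≤ ber(I + X*X) · ber(I + XX*). -/

import Mathlib

variable {E : Type*} [NormedAddCommGroup E] [InnerProductSpace ℂ E] [CompleteSpace E] {Ω : Type*}

/-- Berezin number of `A` w.r.t. the family of normalized reproducing kernels `k`. -/
noncomputable def ber (k : Ω → E) (A : E →L[ℂ] E) : ℝ :=
  ⨆ p : Ω, ‖(inner ℂ (A (k p)) (k p) : ℂ)‖

noncomputable def adj (A : E →L[ℂ] E) : E →L[ℂ] E := ContinuousLinearMap.adjoint A

/-- Real part `(T + T*)/2`. -/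
noncomputable def reOp (T : E →L[ℂ] E) : E →L[ℂ] E := (2 : ℂ)⁻¹ • (T + adj T)

/-- Imaginary part `(T - T*)/(2i)`. -/
noncomputable def imOp (T : E →L[ℂ] E) : E →L[ℂ] E := (2 * Complex.I)⁻¹ • (T - adj T)

/-- `|X| = (X*X)^{1/2}`. -/
noncomputable def absOp (X : E →L[ℂ] E) : E →L[ℂ] E := CFC.sqrt (adj X * X)

lemma le_ber (k : Ω → E) (hk : ∀ p, ‖k p‖ = 1) (A : E →L[ℂ] E) (p : Ω) :
    ‖(inner ℂ (A (k p)) (k p) : ℂ)‖ ≤ ber k A := by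
  apply le_ciSup (f := fun p => ‖(inner ℂ (A (k p)) (k p) : ℂ)‖)
  refine ⟨‖A‖, ?_⟩
  rintro x ⟨q, rfl⟩
  calc ‖(inner ℂ (A (k q)) (k q) : ℂ)‖ ≤ ‖A (k q)‖ * ‖k q‖ := norm_inner_le_norm _ _
    _ ≤ ‖A‖ * ‖k q‖ * ‖k q‖ := by
        gcongr; exact A.le_opNorm _
    _ = ‖A‖ := by rw [hk q]; ring

lemma inner_one_add (k : Ω → E) (hk : ∀ p, ‖k p‖ = 1) (Y : E →L[ℂ] E) (p : Ω) :
    ‖(inner ℂ ((1 + adj Y * Y) (k p)) (k p) : ℂ)‖ = 1 + ‖Y (k p)‖ ^ 2 := by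
  have h1 : ((1 + adj Y * Y) (k p)) = k p + adj Y (Y (k p)) := rfl
  rw [h1, inner_add_left, inner_self_eq_norm_sq_to_K, hk p, adj,
    ContinuousLinearMap.adjoint_inner_left, inner_self_eq_norm_sq_to_K]
  rw [← RCLike.ofReal_pow, ← RCLike.ofReal_pow, ← RCLike.ofReal_add, RCLike.norm_ofReal]
  have h0 : (0:ℝ) ≤ 1 + ‖Y (k p)‖ ^ 2 := by positivity
  rw [one_pow]; exact abs_of_nonneg h0

theorem stmt8 (k : Ω → E) (hk : ∀ p, ‖k p‖ = 1) (X : E →L[ℂ] E) :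
    (ber k X) ^ 2 ≤ ber k (1 + adj X * X) * ber k (1 + X * adj X) := by
  rcases isEmpty_or_nonempty Ω with hΩ | ⟨⟨p₀⟩⟩
  · simp [ber, iSup_of_empty', Real.sSup_empty]
  set A := ber k (1 + adj X * X) with hA
  set B := ber k (1 + X * adj X) with hB
  have hXadj : 1 + X * adj X = 1 + adj (adj X) * adj X := by
    rw [adj, adj, ContinuousLinearMap.adjoint_adjoint]
  have hAp : ∀ p, 1 + ‖X (k p)‖ ^ 2 ≤ A := fun p => by
    rw [hA, ← inner_one_add k hk X p]; exact le_ber k hk _ p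
  have hBp : ∀ p, 1 + ‖adj X (k p)‖ ^ 2 ≤ B := fun p => by
    rw [hB, hXadj, ← inner_one_add k hk (adj X) p]; exact le_ber k hk _ p
  have hA1 : 1 ≤ A := le_trans (by nlinarith [sq_nonneg ‖X (k p₀)‖]) (hAp p₀)
  have hB1 : 1 ≤ B := le_trans (by nlinarith [sq_nonneg ‖adj X (k p₀)‖]) (hBp p₀)
  have hABnn : (0:ℝ) ≤ A * B := by nlinarith
  have key : ∀ p, ‖(inner ℂ (X (k p)) (k p) : ℂ)‖ ^ 2 ≤ A * B := by
    intro p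
    set f := ‖(inner ℂ (X (k p)) (k p) : ℂ)‖ with hf
    have hfa : f ≤ ‖X (k p)‖ := by
      calc f ≤ ‖X (k p)‖ * ‖k p‖ := norm_inner_le_norm _ _
        _ = ‖X (k p)‖ := by rw [hk p, mul_one]
    have hfb : f ≤ ‖adj X (k p)‖ := by
      have : (inner ℂ (adj X (k p)) (k p) : ℂ) = inner ℂ (k p) (X (k p)) :=
        ContinuousLinearMap.adjoint_inner_left X _ _
      calc f = ‖(inner ℂ (adj X (k p)) (k p) : ℂ)‖ := by
              rw [hf, this, ← inner_conj_symm, RCLike.norm_conj]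
        _ ≤ ‖adj X (k p)‖ * ‖k p‖ := norm_inner_le_norm _ _
        _ = ‖adj X (k p)‖ := by rw [hk p, mul_one]
    have hfnn : 0 ≤ f := norm_nonneg _
    have h1 : f ^ 2 ≤ ‖X (k p)‖ * ‖adj X (k p)‖ := by
      rw [sq]; exact mul_le_mul hfa hfb hfnn (norm_nonneg _)
    have h2 : ‖X (k p)‖ * ‖adj X (k p)‖ ≤ Real.sqrt (A * B) := by
      rw [Real.sqrt_mul (by linarith)]
      have h3 : ‖X (k p)‖ ≤ Real.sqrt A := by
        rw [Real.le_sqrt (norm_nonneg _) (by linarith)]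
        nlinarith [hAp p]
      have h4 : ‖adj X (k p)‖ ≤ Real.sqrt B := by
        rw [Real.le_sqrt (norm_nonneg _) (by linarith)]
        nlinarith [hBp p]
      exact mul_le_mul h3 h4 (norm_nonneg _) (Real.sqrt_nonneg _)
    have h5 : Real.sqrt (A * B) ≤ A * B := by
      nlinarith [Real.sq_sqrt hABnn, Real.sqrt_nonneg (A * B), sq_nonneg (Real.sqrt (A * B) - 1)]
    linarith
  have hber : ber k X ≤ Real.sqrt (A * B) := by
    apply Real.iSup_le _ (Real.sqrt_nonneg _)
    intro p
    rw [Real.le_sqrt (norm_nonneg _) hABnn]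
    exact key p
  calc (ber k X) ^ 2 ≤ Real.sqrt (A * B) ^ 2 := by
        have h0 : 0 ≤ ber k X := le_trans (norm_nonneg _) (le_ber k hk X p₀)
        gcongr
    _ = A * B := Real.sq_sqrt hABnn
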